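/- Solution of the Bellman equation for the (d,∞)-runlength-limited input-constrained BSC (core of Theorem 6): Fix an integer d ≥ 1 and p ∈ [0,1], and define ρ_p := max_{a ∈ [0,1]} ( h_b(a·p + (1−a)·(1−p)) − h_b(p) ) / (a·d + 1). Then there exists a function h : {0, 1, …, d} → ℝ such that (i) ρ_p + h(i) = h(i+1) for all 0 ≤ i ≤ d−1, and (ii) ρ_p + h(d) = max_{a ∈ [0,1]} [ h_b(a·p + (1−a)·(1−p)) − h_b(p) + (1−a)·h(d) + a·h(0) ]. In particular, max_{a ∈ [0,1]} [ h_b(a·p + (1−a)·(1−p)) − h_b(p) − (a·d + 1)·ρ_p ] = 0. -/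
import Mathlib


open Finset

/-- The binary entropy function (base 2); the convention `0 · log₂ 0 = 0` is
automatic since `Real.logb 2 0 = 0`. -/
noncomputable def binEnt (x : ℝ) : ℝ :=
  -(x * Real.logb 2 x) - (1 - x) * Real.logb 2 (1 - x)

/-- **Solution of the Bellman equation for the (d,∞)-RLL input-constrained BSC**
(core of Theorem 6 of the paper). With
`ρ_p = max_{a ∈ [0,1]} (h_b(ap + (1−a)(1−p)) − h_b(p)) / (ad + 1)`, there is a
function `h : {0,…,d} → ℝ` with `ρ_p + h(i) = h(i+1)` for `0 ≤ i ≤ d−1` and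
`ρ_p + h(d) = max_{a ∈ [0,1]} [h_b(ap + (1−a)(1−p)) − h_b(p) + (1−a)h(d) + a·h(0)]`;
in particular `max_{a ∈ [0,1]} [h_b(ap + (1−a)(1−p)) − h_b(p) − (ad+1)ρ_p] = 0`. -/
theorem bellman_dinfty_BSC (d : ℕ) (hd : 1 ≤ d) (p : ℝ) (hp : p ∈ Set.Icc (0 : ℝ) 1)
    (ρ : ℝ)
    (hρ : IsGreatest
      ((fun a : ℝ => (binEnt (a * p + (1 - a) * (1 - p)) - binEnt p) / (a * d + 1)) ''
        Set.Icc (0 : ℝ) 1) ρ) :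
    (∃ h : ℕ → ℝ,
      (∀ i < d, ρ + h i = h (i + 1)) ∧
      IsGreatest
        ((fun a : ℝ => binEnt (a * p + (1 - a) * (1 - p)) - binEnt p
            + (1 - a) * h d + a * h 0) '' Set.Icc (0 : ℝ) 1)
        (ρ + h d)) ∧
    IsGreatest
      ((fun a : ℝ => binEnt (a * p + (1 - a) * (1 - p)) - binEnt p - (a * d + 1) * ρ) ''
        Set.Icc (0 : ℝ) 1) 0 := by
  obtain ⟨⟨a₀, ha₀, hfa₀⟩, hub⟩ := hρ
  have hd1 : (1:ℝ) ≤ (d:ℝ) := by exact_mod_cast hd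
  have key : IsGreatest
      ((fun a : ℝ => binEnt (a * p + (1 - a) * (1 - p)) - binEnt p - (a * d + 1) * ρ) ''
        Set.Icc (0 : ℝ) 1) 0 := by
    constructor
    · refine ⟨a₀, ha₀, ?_⟩
      have hpos : (0:ℝ) < a₀ * d + 1 := by nlinarith [ha₀.1]
      have h1 : binEnt (a₀ * p + (1 - a₀) * (1 - p)) - binEnt p = (a₀ * d + 1) * ρ := by
        field_simp at hfa₀
        linarith [hfa₀]
      simp only []
      linarith [h1]
    · rintro x ⟨a, ha, rfl⟩
      have hpos : (0:ℝ) < a * d + 1 := by nlinarith [ha.1]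
      have h2 : (binEnt (a * p + (1 - a) * (1 - p)) - binEnt p) / (a * d + 1) ≤ ρ :=
        hub ⟨a, ha, rfl⟩
      have := (div_le_iff₀ hpos).mp h2
      simp only []
      linarith
  refine ⟨⟨fun i => (i : ℝ) * ρ, ?_, ?_⟩, key⟩
  · intro i _; push_cast; ring
  · constructor
    · refine ⟨a₀, ha₀, ?_⟩
      have h1 := key.1
      obtain ⟨a₁, ha₁, hv⟩ := h1
      -- use a₀ directly
      have hpos : (0:ℝ) < a₀ * d + 1 := by nlinarith [ha₀.1]
      have h1 : binEnt (a₀ * p + (1 - a₀) * (1 - p)) - binEnt p = (a₀ * d + 1) * ρ := by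
        field_simp at hfa₀
        linarith [hfa₀]
      show binEnt (a₀ * p + (1 - a₀) * (1 - p)) - binEnt p
          + (1 - a₀) * ((d:ℝ) * ρ) + a₀ * ((0:ℕ) * ρ) = ρ + (d:ℝ) * ρ
      push_cast
      linear_combination h1
    · rintro x ⟨a, ha, rfl⟩
      have hle := key.2 ⟨a, ha, rfl⟩
      simp only [Nat.cast_zero] at *
      nlinarith [hle]
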